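/- arXiv:1907.09070 — 7 statements merged into one kernel-verified Lean document; each statement's English description precedes it below -/
import Mathlib

section
/- For every signaling rule π with k signals, the posterior-correlation matrix Ξ_π is completely positive and its rows sum to the prior, i.e., Ξ_π 𝟙 = p_o where 𝟙 ∈ ℝ^n is the all-ones vector. -/
open Matrix BigOperators

/-- A real `n × n` matrix is completely positive if it factors as `B * Bᵀ`
for some entrywise-nonnegative `n × k` matrix `B`. -/
def IsCompletelyPositive {n : ℕ} (Ξ : Matrix (Fin n) (Fin n) ℝ) : Prop :=
  ∃ (k : ℕ) (B : Matrix (Fin n) (Fin k) ℝ), (∀ i j, 0 ≤ B i j) ∧ Ξ = B * Bᵀ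

/-- Probability that signal `s` is sent: `p(s) = ∑ j, π(s|z_j) p_o(j)`. -/
noncomputable def sigProb {n k : ℕ} (π : Fin k → Fin n → ℝ) (p_o : Fin n → ℝ) (s : Fin k) : ℝ :=
  ∑ j, π s j * p_o j

/-- Posterior probability of state `j` given signal `s`. -/
noncomputable def posterior {n k : ℕ} (π : Fin k → Fin n → ℝ) (p_o : Fin n → ℝ)
    (s : Fin k) (j : Fin n) : ℝ :=
  π s j * p_o j / sigProb π p_o s

/-- Posterior-correlation matrix `Ξ_π[i,j] = ∑_{s : p(s) > 0} p(s) p_s(i) p_s(j)`. -/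
noncomputable def XiPi {n k : ℕ} (π : Fin k → Fin n → ℝ) (p_o : Fin n → ℝ) :
    Matrix (Fin n) (Fin n) ℝ :=
  Matrix.of fun i j => ∑ s : Fin k,
    if 0 < sigProb π p_o s then
      sigProb π p_o s * posterior π p_o s i * posterior π p_o s j
    else 0

lemma aux_term {n k : ℕ} (p_o : Fin n → ℝ) (hpos : ∀ j, 0 < p_o j)
    (π : Fin k → Fin n → ℝ) (hπnn : ∀ s j, 0 ≤ π s j) (s : Fin k) (i : Fin n) :
    (if 0 < sigProb π p_o s then sigProb π p_o s * posterior π p_o s i else 0)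
      = π s i * p_o i := by
  have hnn : 0 ≤ sigProb π p_o s :=
    Finset.sum_nonneg fun j _ => mul_nonneg (hπnn s j) (hpos j).le
  by_cases h : 0 < sigProb π p_o s
  · simp only [if_pos h, posterior]
    field_simp
  · have h0 : sigProb π p_o s = 0 := le_antisymm (not_lt.mp h) hnn
    have := (Finset.sum_eq_zero_iff_of_nonneg
      (fun j _ => mul_nonneg (hπnn s j) (hpos j).le)).mp h0 i (Finset.mem_univ i)
    rw [if_neg h, this]

/-- For every signaling rule `π` with `k` signals, the posterior-correlation matrix `Ξ_π`
is completely positive and its rows sum to the prior: `Ξ_π 𝟙 = p_o`. -/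
theorem XiPi_completelyPositive_and_rowsum {n k : ℕ}
    (p_o : Fin n → ℝ) (hpos : ∀ j, 0 < p_o j) (hsum : ∑ j, p_o j = 1)
    (π : Fin k → Fin n → ℝ) (hπnn : ∀ s j, 0 ≤ π s j) (hπsum : ∀ j, ∑ s, π s j = 1) :
    IsCompletelyPositive (XiPi π p_o) ∧
      (XiPi π p_o).mulVec (fun _ => (1 : ℝ)) = p_o := by
  have hnn : ∀ s, 0 ≤ sigProb π p_o s := fun s =>
    Finset.sum_nonneg fun j _ => mul_nonneg (hπnn s j) (hpos j).le
  have hpostnn : ∀ s i, 0 ≤ posterior π p_o s i := fun s i =>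
    div_nonneg (mul_nonneg (hπnn s i) (hpos i).le) (hnn s)
  constructor
  · refine ⟨k, Matrix.of fun i s =>
      if 0 < sigProb π p_o s then Real.sqrt (sigProb π p_o s) * posterior π p_o s i else 0,
      fun i s => ?_, ?_⟩
    · dsimp only [Matrix.of_apply]
      split
      · exact mul_nonneg (Real.sqrt_nonneg _) (hpostnn _ _)
      · exact le_refl 0
    · ext i j
      simp only [XiPi, Matrix.mul_apply, Matrix.transpose_apply, Matrix.of_apply]
      apply Finset.sum_congr rfl
      intro s _
      by_cases h : 0 < sigProb π p_o s
      · simp only [if_pos h]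
        have : Real.sqrt (sigProb π p_o s) * Real.sqrt (sigProb π p_o s) = sigProb π p_o s :=
          Real.mul_self_sqrt (hnn s)
        ring_nf
        rw [Real.sq_sqrt (hnn s)]
        ring
      · simp [h]
  · ext i
    simp only [Matrix.mulVec, dotProduct, XiPi, Matrix.of_apply, mul_one]
    rw [Finset.sum_comm]
    have : ∀ s : Fin k, (∑ j, if 0 < sigProb π p_o s then
        sigProb π p_o s * posterior π p_o s i * posterior π p_o s j else 0)
        = π s i * p_o i := by
      intro s
      rw [← aux_term p_o hpos π hπnn s i]
      by_cases h : 0 < sigProb π p_o s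
      · simp only [if_pos h]
        rw [← Finset.mul_sum]
        have hsum1 : ∑ j, posterior π p_o s j = 1 := by
          simp only [posterior, ← Finset.sum_div, sigProb]
          exact div_self h.ne'
        rw [hsum1, mul_one]
      · simp [h]
    rw [Finset.sum_congr rfl (fun s _ => this s), ← Finset.sum_mul, hπsum i, one_mul]
end

section
/- Let Ξ ∈ ℝ^{n×n} be completely positive with Ξ 𝟙 = p_o, and let Ξ = Σ_{i=1}^k b_i b_iᵀ with b_i ∈ ℝ^n entrywise nonnegative and b_i ≠ 0 for all i. Then π defined by π(s_i|z_j) = (b_iᵀ𝟙) · b_{i,j} / p_o(j) is a valid signaling rule with k signals (i.e., π(s_i|z_j) ≥ 0 and Σ_{i=1}^k π(s_i|z_j) = 1 for every j), and its posterior-correlation matrix satisfies Ξ_π = Ξ. -/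
open Matrix BigOperators

/-- The signaling rule `π(s_i|z_j) = (b_iᵀ𝟙) b_{i,j} / p_o(j)` built from a
completely positive factorization `Ξ = ∑ i, b_i b_iᵀ`. -/
noncomputable def ruleOf {n k : ℕ} (b : Fin k → Fin n → ℝ) (p_o : Fin n → ℝ) :
    Fin k → Fin n → ℝ :=
  fun i j => (∑ r, b i r) * b i j / p_o j

/-- If `Ξ` is completely positive with `Ξ 𝟙 = p_o` and `Ξ = ∑ i, b_i b_iᵀ` with the `b_i`
entrywise nonnegative and nonzero, then `π(s_i|z_j) = (b_iᵀ𝟙) b_{i,j} / p_o(j)` is a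
valid signaling rule with `k` signals whose posterior-correlation matrix equals `Ξ`. -/
theorem ruleOf_valid_and_XiPi_eq {n k : ℕ}
    (p_o : Fin n → ℝ) (hpos : ∀ j, 0 < p_o j) (hsum : ∑ j, p_o j = 1)
    (Ξ : Matrix (Fin n) (Fin n) ℝ)
    (hCP : IsCompletelyPositive Ξ)
    (hrow : Ξ.mulVec (fun _ => (1 : ℝ)) = p_o)
    (b : Fin k → Fin n → ℝ) (hbnn : ∀ i j, 0 ≤ b i j) (hbne : ∀ i, b i ≠ 0)
    (hdec : ∀ r c, Ξ r c = ∑ i, b i r * b i c) :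
    (∀ i j, 0 ≤ ruleOf b p_o i j) ∧
      (∀ j, ∑ i, ruleOf b p_o i j = 1) ∧
      XiPi (ruleOf b p_o) p_o = Ξ := by
  have hS : ∀ i, 0 < ∑ r, b i r := by
    intro i
    obtain ⟨r, hr⟩ : ∃ r, b i r ≠ 0 := by
      by_contra h; push_neg at h
      exact hbne i (funext fun r => h r)
    exact Finset.sum_pos' (fun j _ => hbnn i j)
      ⟨r, Finset.mem_univ r, lt_of_le_of_ne (hbnn i r) (Ne.symm hr)⟩
  have hsig : ∀ s, sigProb (ruleOf b p_o) p_o s = (∑ r, b s r) * (∑ r, b s r) := by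
    intro s
    unfold sigProb ruleOf
    have h : ∀ j ∈ Finset.univ, (∑ r, b s r) * b s j / p_o j * p_o j = (∑ r, b s r) * b s j := by
      intro j _
      have := (hpos j).ne'
      field_simp
    rw [Finset.sum_congr rfl h, ← Finset.mul_sum]
  have hsum' : ∀ j, ∑ i, ruleOf b p_o i j = 1 := by
    intro j
    unfold ruleOf
    rw [← Finset.sum_div]
    have h1 : ∑ i, (∑ r, b i r) * b i j = ∑ r, Ξ j r := by
      simp_rw [Finset.sum_mul]
      rw [Finset.sum_comm]
      refine Finset.sum_congr rfl fun r _ => ?_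
      rw [hdec j r]
      exact Finset.sum_congr rfl fun i _ => mul_comm _ _
    have h2 : ∑ r, Ξ j r = p_o j := by
      have := congrFun hrow j
      simpa [Matrix.mulVec, dotProduct] using this
    rw [h1, h2, div_self (hpos j).ne']
  refine ⟨fun i j => div_nonneg (mul_nonneg (Finset.sum_nonneg fun r _ => hbnn i r) (hbnn i j)) (hpos j).le, hsum', ?_⟩
  ext i j
  simp only [XiPi, Matrix.of_apply]
  rw [hdec i j]
  refine Finset.sum_congr rfl fun s _ => ?_
  have hSpos := hS s
  have hpossig : 0 < sigProb (ruleOf b p_o) p_o s := by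
    rw [hsig s]; positivity
  rw [if_pos hpossig]
  unfold posterior
  rw [hsig s]
  unfold ruleOf
  have hi := (hpos i).ne'
  have hj := (hpos j).ne'
  field_simp
end

section
/- Let z_1,…,z_n ∈ ℝ^{2m}, Z = [z_1 … z_n] ∈ ℝ^{2m×n}, V = [[I_m, −I_m],[−I_m, O_m]] ∈ ℝ^{2m×2m}, and V̄ = Zᵀ V Z. Then the infimum of tr(Ξ_π V̄) over all k ∈ ℕ and all signaling rules π with k signals equals the infimum of tr(Ξ V̄) over all completely positive matrices Ξ ∈ ℝ^{n×n} satisfying Ξ 𝟙 = p_o. -/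
open Matrix BigOperators

/-- Every posterior-correlation matrix is completely positive. -/
lemma XiPi_isCP {n k : ℕ} (π : Fin k → Fin n → ℝ) (p_o : Fin n → ℝ)
    (hpos : ∀ j, 0 < p_o j) (hπ0 : ∀ s j, 0 ≤ π s j) :
    IsCompletelyPositive (XiPi π p_o) := by
  refine ⟨k, Matrix.of fun i s =>
    if 0 < sigProb π p_o s then Real.sqrt (sigProb π p_o s) * posterior π p_o s i else 0,
    ?_, ?_⟩
  · intro i s
    simp only [Matrix.of_apply]
    split
    · rename_i h
      exact mul_nonneg (Real.sqrt_nonneg _)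
        (div_nonneg (mul_nonneg (hπ0 _ _) (hpos i).le) h.le)
    · exact le_refl 0
  · ext i j
    simp only [XiPi, Matrix.of_apply, Matrix.mul_apply, Matrix.transpose_apply]
    refine Finset.sum_congr rfl fun s _ => ?_
    split
    · rename_i h
      rw [mul_mul_mul_comm, Real.mul_self_sqrt h.le]
      ring
    · simp

/-- A posterior-correlation matrix has row sums `p_o`. -/
lemma XiPi_mulVec {n k : ℕ} (π : Fin k → Fin n → ℝ) (p_o : Fin n → ℝ)
    (hpos : ∀ j, 0 < p_o j) (hπ0 : ∀ s j, 0 ≤ π s j) (hπ1 : ∀ j, ∑ s, π s j = 1) :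
    (XiPi π p_o).mulVec (fun _ => (1 : ℝ)) = p_o := by
  funext i
  simp only [Matrix.mulVec, dotProduct, XiPi, Matrix.of_apply, mul_one]
  rw [Finset.sum_comm]
  have key : ∀ s : Fin k,
      (∑ j, if 0 < sigProb π p_o s then
        sigProb π p_o s * posterior π p_o s i * posterior π p_o s j else 0)
      = π s i * p_o i := by
    intro s
    by_cases h : 0 < sigProb π p_o s
    · simp only [if_pos h]
      rw [← Finset.mul_sum]
      have hsum1 : ∑ j, posterior π p_o s j = 1 := by
        simp only [posterior, ← Finset.sum_div]
        exact div_self (ne_of_gt h)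
      rw [hsum1, mul_one, posterior]
      field_simp
    · simp only [if_neg h, Finset.sum_const_zero]
      have h0 : sigProb π p_o s = 0 := by
        have : 0 ≤ sigProb π p_o s :=
          Finset.sum_nonneg fun j _ => mul_nonneg (hπ0 s j) (hpos j).le
        rcases lt_or_eq_of_le this with h' | h'
        · exact absurd h' h
        · exact h'.symm
      have := (Finset.sum_eq_zero_iff_of_nonneg
        (fun j _ => mul_nonneg (hπ0 s j) (hpos j).le)).mp h0 i (Finset.mem_univ i)
      exact this.symm
  rw [Finset.sum_congr rfl fun s _ => key s, ← Finset.sum_mul, hπ1 i, one_mul]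

/-- With `Z = [z_1 … z_n] ∈ ℝ^{2m×n}`, `V = [[I, −I], [−I, O]]` and `V̄ = Zᵀ V Z`, the
infimum of `tr(Ξ_π V̄)` over all `k` and all signaling rules `π` with `k` signals equals
the infimum of `tr(Ξ V̄)` over all completely positive `Ξ` with `Ξ 𝟙 = p_o`. -/
theorem sInf_signaling_eq_sInf_cp {m n : ℕ}
    (p_o : Fin n → ℝ) (hpos : ∀ j, 0 < p_o j) (hsum : ∑ j, p_o j = 1)
    (Z : Matrix (Fin m ⊕ Fin m) (Fin n) ℝ) :
    let V : Matrix (Fin m ⊕ Fin m) (Fin m ⊕ Fin m) ℝ := Matrix.fromBlocks 1 (-1) (-1) 0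
    let Vbar : Matrix (Fin n) (Fin n) ℝ := Zᵀ * V * Z
    sInf {c : ℝ | ∃ (k : ℕ) (π : Fin k → Fin n → ℝ),
        (∀ s j, 0 ≤ π s j) ∧ (∀ j, ∑ s, π s j = 1) ∧
        c = Matrix.trace (XiPi π p_o * Vbar)} =
      sInf {c : ℝ | ∃ Ξ : Matrix (Fin n) (Fin n) ℝ,
        IsCompletelyPositive Ξ ∧ Ξ.mulVec (fun _ => (1 : ℝ)) = p_o ∧
        c = Matrix.trace (Ξ * Vbar)} := by
  intro V Vbar
  congr 1
  ext c
  simp only [Set.mem_setOf_eq]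
  constructor
  · rintro ⟨k, π, hπ0, hπ1, rfl⟩
    exact ⟨XiPi π p_o, XiPi_isCP π p_o hpos hπ0, XiPi_mulVec π p_o hpos hπ0 hπ1, rfl⟩
  · rintro ⟨Ξ, ⟨k, B, hB, rfl⟩, hmul, rfl⟩
    set T : Fin k → ℝ := fun s => ∑ i, B i s with hT
    have hT0 : ∀ s, 0 ≤ T s := fun s => Finset.sum_nonneg fun i _ => hB i s
    have hrow : ∀ j, ∑ s, B j s * T s = p_o j := by
      intro j
      have := congrFun hmul j
      simp only [Matrix.mulVec, dotProduct, mul_one, Matrix.mul_apply,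
        Matrix.transpose_apply] at this
      rw [← this, Finset.sum_comm]
      refine Finset.sum_congr rfl fun s _ => ?_
      rw [hT, Finset.mul_sum]
    set π : Fin k → Fin n → ℝ := fun s j => B j s * T s / p_o j with hπ
    have hπ0 : ∀ s j, 0 ≤ π s j := fun s j =>
      div_nonneg (mul_nonneg (hB j s) (hT0 s)) (hpos j).le
    have hπ1 : ∀ j, ∑ s, π s j = 1 := by
      intro j
      simp only [hπ, ← Finset.sum_div, hrow j]
      exact div_self (ne_of_gt (hpos j))
    have hsig : ∀ s, sigProb π p_o s = T s * T s := by
      intro s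
      simp only [sigProb, hπ]
      have hc : ∀ j : Fin n, B j s * T s / p_o j * p_o j = B j s * T s := fun j =>
        div_mul_cancel₀ _ (ne_of_gt (hpos j))
      rw [Finset.sum_congr rfl fun j _ => hc j, ← Finset.sum_mul]
    have hXi : XiPi π p_o = B * Bᵀ := by
      ext i j
      simp only [XiPi, Matrix.of_apply, Matrix.mul_apply, Matrix.transpose_apply]
      refine Finset.sum_congr rfl fun s _ => ?_
      by_cases h : 0 < sigProb π p_o s
      · rw [if_pos h]
        have hTpos : 0 < T s := by
          by_contra hc
          push_neg at hc
          have h0 : T s = 0 := le_antisymm hc (hT0 s)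
          rw [hsig, h0, mul_zero] at h
          exact lt_irrefl 0 h
        simp only [posterior, hsig]
        simp only [hπ]
        have hp : p_o i ≠ 0 := ne_of_gt (hpos i)
        have hq : p_o j ≠ 0 := ne_of_gt (hpos j)
        field_simp
      · rw [if_neg h]
        have hT0' : T s = 0 := by
          by_contra hc
          have : 0 < T s := lt_of_le_of_ne (hT0 s) (Ne.symm hc)
          exact h (by rw [hsig]; positivity)
        have hBi : B i s = 0 :=
          (Finset.sum_eq_zero_iff_of_nonneg (fun l _ => hB l s)).mp hT0' i
            (Finset.mem_univ i)
        rw [hBi, zero_mul]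
    exact ⟨k, π, hπ0, hπ1, by rw [hXi]⟩
end

section
/- Strong duality holds between the primal completely positive program and its copositive dual: for every symmetric V̄ ∈ ℝ^{n×n}, the infimum of tr(Ξ V̄) over all completely positive Ξ with Ξ 𝟙 = p_o equals the supremum of p_oᵀ y over all y ∈ ℝ^n for which the symmetric matrix V̄ − (1/2)(𝟙 yᵀ + y 𝟙ᵀ) is copositive. -/
open Matrix BigOperators

/-- A real symmetric matrix `S` (indexed by `Fin n`) is copositive if
`bᵀ S b ≥ 0` for every entrywise-nonnegative `b ∈ ℝ^n`. -/
def IsCopositive {n : ℕ} (S : Matrix (Fin n) (Fin n) ℝ) : Prop :=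
  ∀ b : Fin n → ℝ, (∀ i, 0 ≤ b i) → 0 ≤ b ⬝ᵥ S.mulVec b

open Set in


lemma aux_sum_embed {ι κ β : Type*} [Fintype ι] [Fintype κ] [AddCommMonoid β]
    (e : ι ↪ κ) (F : κ → β) (hF : ∀ j, (¬ ∃ i, e i = j) → F j = 0) :
    ∑ j, F j = ∑ i, F (e i) := by
  classical
  rw [← Finset.sum_map Finset.univ e F]
  symm
  apply Finset.sum_subset (Finset.subset_univ _)
  intro j _ hj
  exact hF j fun ⟨i, hi⟩ => hj (Finset.mem_map.2 ⟨i, Finset.mem_univ _, hi⟩)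

lemma aux_isCompact_convexHull {E : Type*} [NormedAddCommGroup E] [NormedSpace ℝ E]
    [FiniteDimensional ℝ E] {s : Set E} (hs : IsCompact s) :
    IsCompact (convexHull ℝ s) := by
  rcases s.eq_empty_or_nonempty with rfl | ⟨x₀, hx₀⟩
  · simpa using isCompact_empty
  set m := Module.finrank ℝ E + 2 with hm
  set Φ : (Fin m → ℝ) × (Fin m → E) → E := fun p => ∑ i, p.1 i • p.2 i with hΦ
  have hΦc : Continuous Φ :=
    continuous_finset_sum _ fun i _ =>
      ((continuous_apply i).comp continuous_fst).smul ((continuous_apply i).comp continuous_snd)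
  have hW : IsCompact (stdSimplex ℝ (Fin m) ×ˢ Set.univ.pi fun _ : Fin m => s) :=
    (isCompact_stdSimplex ℝ (Fin m)).prod (isCompact_univ_pi fun _ => hs)
  have key : convexHull ℝ s = Φ '' (stdSimplex ℝ (Fin m) ×ˢ Set.univ.pi fun _ : Fin m => s) := by
    apply Set.Subset.antisymm
    · intro x hx
      obtain ⟨ι, hι, z, w, hzs, hai, hw0, hw1, hwz⟩ :=
        eq_pos_convex_span_of_mem_convexHull hx
      have hcard : Fintype.card ι ≤ m := by
        calc Fintype.card ι ≤ Module.finrank ℝ (vectorSpan ℝ (Set.range z)) + 1 :=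
              hai.card_le_finrank_succ
        _ ≤ Module.finrank ℝ E + 1 := by
              have := Submodule.finrank_le (vectorSpan ℝ (Set.range z))
              omega
        _ ≤ m := by omega
      obtain ⟨e⟩ : Nonempty (ι ↪ Fin m) :=
        Function.Embedding.nonempty_of_card_le (by simpa using hcard)
      classical
      set w' : Fin m → ℝ := fun j => if h : ∃ i, e i = j then w h.choose else 0 with hw'
      set z' : Fin m → E := fun j => if h : ∃ i, e i = j then z h.choose else x₀ with hz'
      have hchoose : ∀ i : ι, (⟨i, rfl⟩ : ∃ i', e i' = e i).choose = i := fun i =>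
        e.injective (⟨i, rfl⟩ : ∃ i', e i' = e i).choose_spec
      have hw'e : ∀ i, w' (e i) = w i := fun i => by
        simp only [hw']; rw [dif_pos ⟨i, rfl⟩, hchoose i]
      have hz'e : ∀ i, z' (e i) = z i := fun i => by
        simp only [hz']; rw [dif_pos ⟨i, rfl⟩, hchoose i]
      have hw'0 : ∀ j, (¬ ∃ i, e i = j) → w' j = 0 := fun j hj => by
        simp [hw', hj]
      refine ⟨(w', z'), ⟨⟨fun j => ?_, ?_⟩, fun j _ => ?_⟩, ?_⟩
      · by_cases h : ∃ i, e i = j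
        · simpa [hw', h] using (hw0 _).le
        · simp [hw', h]
      · rw [aux_sum_embed e w' hw'0]
        simp only [hw'e]; exact hw1
      · by_cases h : ∃ i, e i = j
        · simp only [hz', dif_pos h]; exact hzs ⟨_, rfl⟩
        · simpa [hz', h] using hx₀
      · simp only [hΦ]
        rw [aux_sum_embed e (fun j => w' j • z' j) (fun j hj => by rw [hw'0 j hj, zero_smul])]
        simp only [hw'e, hz'e]; exact hwz
    · rintro x ⟨⟨w, z⟩, ⟨hwmem, hzmem⟩, rfl⟩
      exact mem_convexHull_of_exists_fintype w z (fun i => hwmem.1 i) hwmem.2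
        (fun i => hzmem i (Set.mem_univ i)) rfl
  rw [key]
  exact hW.image hΦc



lemma aux_quad {n : ℕ} (V : Matrix (Fin n) (Fin n) ℝ) (y b : Fin n → ℝ) :
    b ⬝ᵥ (V - (1/2 : ℝ) • (Matrix.vecMulVec (fun _ => (1:ℝ)) y
        + Matrix.vecMulVec y (fun _ => (1:ℝ)))).mulVec b
      = b ⬝ᵥ V.mulVec b - (∑ i, b i) * (y ⬝ᵥ b) := by
  have h3 : ∑ i, ∑ j, (1/2 : ℝ) * (b i * y i * b j) =
      ∑ i, ∑ j, (1/2 : ℝ) * (b i * (y j * b j)) := by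
    rw [Finset.sum_comm]
    exact Finset.sum_congr rfl fun i _ => Finset.sum_congr rfl fun j _ => by ring
  calc b ⬝ᵥ (V - (1/2 : ℝ) • (Matrix.vecMulVec (fun _ => (1:ℝ)) y
        + Matrix.vecMulVec y (fun _ => (1:ℝ)))).mulVec b
      = ∑ i, ∑ j, (b i * (V i j * b j) - (1/2 : ℝ) * (b i * (y j * b j))
          - (1/2 : ℝ) * (b i * y i * b j)) := by
        simp only [dotProduct, mulVec, Matrix.sub_apply, Matrix.smul_apply, Matrix.add_apply,
          Matrix.vecMulVec_apply, smul_eq_mul, Finset.mul_sum]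
        exact Finset.sum_congr rfl fun i _ => Finset.sum_congr rfl fun j _ => by ring
    _ = ∑ i, ∑ j, b i * (V i j * b j) - (∑ i, ∑ j, (1/2 : ℝ) * (b i * (y j * b j))
          + ∑ i, ∑ j, (1/2 : ℝ) * (b i * y i * b j)) := by
        simp only [Finset.sum_sub_distrib]
        ring
    _ = ∑ i, ∑ j, b i * (V i j * b j) - ∑ i, ∑ j, b i * (y j * b j) := by
        rw [h3, ← Finset.sum_add_distrib]
        congr 1
        refine Finset.sum_congr rfl fun i _ => ?_
        rw [← Finset.sum_add_distrib]
        exact Finset.sum_congr rfl fun j _ => by ring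
    _ = b ⬝ᵥ V.mulVec b - (∑ i, b i) * (y ⬝ᵥ b) := by
        simp only [dotProduct, mulVec, Finset.mul_sum, Finset.sum_mul]
        congr 1
        rw [Finset.sum_comm]

lemma aux_homog {n : ℕ} (V : Matrix (Fin n) (Fin n) ℝ) (t : ℝ) (b : Fin n → ℝ) :
    (t • b) ⬝ᵥ V.mulVec (t • b) = t^2 * (b ⬝ᵥ V.mulVec b) := by
  simp only [dotProduct, mulVec, Pi.smul_apply, smul_eq_mul, Finset.mul_sum]
  exact Finset.sum_congr rfl fun i _ => Finset.sum_congr rfl fun j _ => by ring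

lemma aux_trace {n k : ℕ} (V : Matrix (Fin n) (Fin n) ℝ) (hV : V.IsSymm)
    (B : Matrix (Fin n) (Fin k) ℝ) :
    Matrix.trace (B * Bᵀ * V) = ∑ l, (fun i => B i l) ⬝ᵥ V.mulVec (fun i => B i l) := by
  simp only [Matrix.trace, Matrix.diag, Matrix.mul_apply, Matrix.transpose_apply,
    dotProduct, mulVec]
  have : ∀ (F : Fin n → Fin n → Fin k → ℝ), ∑ i, ∑ j, ∑ l, F i j l = ∑ l, ∑ i, ∑ j, F i j l := by
    intro F
    have h1 : ∀ i : Fin n, ∑ j, ∑ l, F i j l = ∑ l, ∑ j, F i j l := fun i => Finset.sum_comm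
    simp only [h1]
    exact Finset.sum_comm
  calc ∑ i, (∑ j, (∑ l, B i l * B j l) * V j i)
      = ∑ i, ∑ j, ∑ l, B i l * B j l * V j i := by
        refine Finset.sum_congr rfl fun i _ => Finset.sum_congr rfl fun j _ => ?_
        rw [Finset.sum_mul]
    _ = ∑ l, ∑ i, ∑ j, B i l * B j l * V j i := this _
    _ = ∑ l, ∑ i, B i l * ∑ j, V i j * B j l := by
        refine Finset.sum_congr rfl fun l _ => Finset.sum_congr rfl fun i _ => ?_
        rw [Finset.mul_sum]
        refine Finset.sum_congr rfl fun j _ => ?_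
        rw [← hV.apply i j]
        ring

lemma aux_rowsum {n k : ℕ} (B : Matrix (Fin n) (Fin k) ℝ) (i : Fin n) :
    (B * Bᵀ).mulVec (fun _ => (1:ℝ)) i = ∑ l, B i l * (∑ j, B j l) := by
  simp only [mulVec, dotProduct, Matrix.mul_apply, Matrix.transpose_apply, mul_one]
  rw [Finset.sum_comm]
  exact Finset.sum_congr rfl fun l _ => by rw [Finset.mul_sum]

lemma aux_fcont {n : ℕ} (V : Matrix (Fin n) (Fin n) ℝ) :
    Continuous fun q : Fin n → ℝ => q ⬝ᵥ V.mulVec q := by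
  have : (fun q : Fin n → ℝ => q ⬝ᵥ V.mulVec q)
      = fun q => ∑ i, q i * ∑ j, V i j * q j := by
    funext q; simp [dotProduct, mulVec]
  rw [this]
  exact continuous_finset_sum _ fun i _ => (continuous_apply i).mul
    (continuous_finset_sum _ fun j _ => continuous_const.mul (continuous_apply j))

/-- Strong duality between the primal completely positive program and its copositive
dual: the infimum of `tr(Ξ V̄)` over completely positive `Ξ` with `Ξ 𝟙 = p_o` equals
the supremum of `p_oᵀ y` over `y` such that `V̄ − (1/2)(𝟙 yᵀ + y 𝟙ᵀ)` is copositive. -/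
theorem cp_strong_duality {n : ℕ}
    (p_o : Fin n → ℝ) (hpos : ∀ j, 0 < p_o j) (hsum : ∑ j, p_o j = 1)
    (Vbar : Matrix (Fin n) (Fin n) ℝ) (hV : Vbar.IsSymm) :
    sInf {c : ℝ | ∃ Ξ : Matrix (Fin n) (Fin n) ℝ,
        IsCompletelyPositive Ξ ∧ Ξ.mulVec (fun _ => (1 : ℝ)) = p_o ∧
        c = Matrix.trace (Ξ * Vbar)} =
      sSup {c : ℝ | ∃ y : Fin n → ℝ,
        IsCopositive (Vbar - (1/2 : ℝ) •
          (Matrix.vecMulVec (fun _ => (1 : ℝ)) y + Matrix.vecMulVec y (fun _ => (1 : ℝ)))) ∧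
        c = p_o ⬝ᵥ y} := by
  classical
  set SP := {c : ℝ | ∃ Ξ : Matrix (Fin n) (Fin n) ℝ,
      IsCompletelyPositive Ξ ∧ Ξ.mulVec (fun _ => (1 : ℝ)) = p_o ∧
      c = Matrix.trace (Ξ * Vbar)} with hSPdef
  set SD := {c : ℝ | ∃ y : Fin n → ℝ,
      IsCopositive (Vbar - (1/2 : ℝ) •
        (Matrix.vecMulVec (fun _ => (1 : ℝ)) y + Matrix.vecMulVec y (fun _ => (1 : ℝ)))) ∧
      c = p_o ⬝ᵥ y} with hSDdef
  set f : (Fin n → ℝ) → ℝ := fun q => q ⬝ᵥ Vbar.mulVec q with hfdef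
  set G : Set ((Fin n → ℝ) × ℝ) := (fun q => (q, f q)) '' stdSimplex ℝ (Fin n) with hGdef
  set K := convexHull ℝ G with hKdef
  have hGcomp : IsCompact G :=
    (isCompact_stdSimplex ℝ (Fin n)).image (continuous_id.prodMk (aux_fcont Vbar))
  have hKcomp : IsCompact K := aux_isCompact_convexHull hGcomp
  have hpΔ : p_o ∈ stdSimplex ℝ (Fin n) := ⟨fun i => (hpos i).le, hsum⟩
  -- claim A : primal values give points of K over p_o
  have claimA : ∀ c ∈ SP, ((p_o, c) : (Fin n → ℝ) × ℝ) ∈ K := by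
    rintro c ⟨Ξ, ⟨k, B, hB, rfl⟩, hrow, rfl⟩
    set bcol : Fin k → Fin n → ℝ := fun l i => B i l with hbcol
    set t : Fin k → ℝ := fun l => ∑ i, B i l with htdef
    set w : Fin k → ℝ := fun l => (t l)^2 with hwdef
    set q : Fin k → Fin n → ℝ := fun l => if t l = 0 then p_o else (t l)⁻¹ • bcol l with hqdef
    have ht0 : ∀ l, 0 ≤ t l := fun l => Finset.sum_nonneg fun i _ => hB i l
    have hbz : ∀ l, t l = 0 → bcol l = 0 := fun l hl => funext fun i =>
      (Finset.sum_eq_zero_iff_of_nonneg fun i _ => hB i l).1 hl i (Finset.mem_univ i)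
    have hrow' : ∀ i, ∑ l, B i l * t l = p_o i := by
      intro i
      rw [← congrFun hrow i, aux_rowsum]
    have hqs : ∀ l, q l ∈ stdSimplex ℝ (Fin n) := by
      intro l
      by_cases hl : t l = 0
      · simpa [hqdef, hl] using hpΔ
      · refine ⟨fun i => ?_, ?_⟩
        · simp only [hqdef, if_neg hl, Pi.smul_apply, smul_eq_mul]
          exact mul_nonneg (inv_nonneg.2 (ht0 l)) (hB i l)
        · simp only [hqdef, if_neg hl, Pi.smul_apply, smul_eq_mul, ← Finset.mul_sum]
          exact inv_mul_cancel₀ hl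
    have hwq : ∀ l, w l • q l = t l • bcol l := by
      intro l
      by_cases hl : t l = 0
      · simp [hwdef, hqdef, hl, hbz l hl]
      · simp only [hwdef, hqdef, if_neg hl, smul_smul]
        congr 1
        field_simp
    have hwf : ∀ l, w l * f (q l) = bcol l ⬝ᵥ Vbar.mulVec (bcol l) := by
      intro l
      by_cases hl : t l = 0
      · simp [hwdef, hl, hbz l hl, hfdef]
      · have h2 : f (q l) = ((t l)⁻¹)^2 * (bcol l ⬝ᵥ Vbar.mulVec (bcol l)) := by
          simp only [hfdef, hqdef, if_neg hl]
          exact aux_homog Vbar (t l)⁻¹ (bcol l)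
        rw [h2, hwdef]
        field_simp
    rw [hKdef]
    refine mem_convexHull_of_exists_fintype w (fun l => ((q l, f (q l)) : (Fin n → ℝ) × ℝ))
      (fun l => sq_nonneg _) ?_ (fun l => ⟨q l, hqs l, rfl⟩) ?_
    · calc ∑ l, w l = ∑ l, (∑ i, B i l) * t l := by
            refine Finset.sum_congr rfl fun l _ => ?_
            simp only [hwdef, htdef]
            ring
        _ = ∑ l, ∑ i, B i l * t l := by
            exact Finset.sum_congr rfl fun l _ => by rw [Finset.sum_mul]
        _ = ∑ i, ∑ l, B i l * t l := Finset.sum_comm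
        _ = ∑ i, p_o i := Finset.sum_congr rfl fun i _ => hrow' i
        _ = 1 := hsum
    · ext i
      · rw [Prod.fst_sum]
        simp only [Prod.smul_fst]
        rw [Finset.sum_apply]
        calc ∑ l, (w l • q l) i = ∑ l, B i l * t l := by
              refine Finset.sum_congr rfl fun l _ => ?_
              rw [hwq l]
              simp only [Pi.smul_apply, smul_eq_mul, hbcol]
              ring
          _ = p_o i := hrow' i
      · rw [Prod.snd_sum]
        simp only [Prod.smul_snd, smul_eq_mul]
        rw [aux_trace Vbar hV B]
        exact Finset.sum_congr rfl fun l _ => hwf l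
  -- claim B : points of K over p_o give primal values
  have claimB : ∀ t : ℝ, ((p_o, t) : (Fin n → ℝ) × ℝ) ∈ K → t ∈ SP := by
    intro t ht
    rw [hKdef, mem_convexHull_iff_exists_fintype] at ht
    obtain ⟨ι, hι, w, z, hw0, hw1, hzG, hzsum⟩ := ht
    have hex : ∀ i, ∃ q, q ∈ stdSimplex ℝ (Fin n) ∧ z i = (q, f q) := by
      intro i; obtain ⟨q, hq, hzq⟩ := hzG i; exact ⟨q, hq, hzq.symm⟩
    choose q hqs hzq using hex
    set e := Fintype.equivFin ι with hedef
    set B : Matrix (Fin n) (Fin (Fintype.card ι)) ℝ :=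
      Matrix.of fun i l => Real.sqrt (w (e.symm l)) * q (e.symm l) i with hBdef
    have hBnn : ∀ i l, 0 ≤ B i l := fun i l =>
      mul_nonneg (Real.sqrt_nonneg _) ((hqs _).1 i)
    have hcol : ∀ l, (fun i => B i l) = Real.sqrt (w (e.symm l)) • q (e.symm l) := fun l => rfl
    have hfst : ∑ i', w i' • q i' = p_o := by
      have h := congrArg Prod.fst hzsum
      rw [Prod.fst_sum] at h
      simp only [hzq, Prod.smul_fst] at h
      exact h
    have hsnd : ∑ i', w i' * f (q i') = t := by
      have h := congrArg Prod.snd hzsum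
      rw [Prod.snd_sum] at h
      simp only [hzq, Prod.smul_snd, smul_eq_mul] at h
      exact h
    refine ⟨B * Bᵀ, ⟨_, B, hBnn, rfl⟩, ?_, ?_⟩
    · funext i
      rw [aux_rowsum]
      calc ∑ l, B i l * (∑ j, B j l)
          = ∑ l, w (e.symm l) * q (e.symm l) i := by
            refine Finset.sum_congr rfl fun l _ => ?_
            have hqsum : ∑ j, q (e.symm l) j = 1 := (hqs _).2
            simp only [hBdef, Matrix.of_apply, ← Finset.mul_sum, hqsum, mul_one]
            rw [show Real.sqrt (w (e.symm l)) * q (e.symm l) i * Real.sqrt (w (e.symm l))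
                = Real.sqrt (w (e.symm l)) * Real.sqrt (w (e.symm l)) * q (e.symm l) i by ring,
              Real.mul_self_sqrt (hw0 _)]
        _ = ∑ i', w i' * q i' i := Equiv.sum_comp e.symm (fun i' => w i' * q i' i)
        _ = p_o i := by
            have h := congrFun hfst i
            rw [Finset.sum_apply] at h
            simpa using h
    · rw [aux_trace Vbar hV B, ← hsnd,
        ← Equiv.sum_comp e.symm (fun i' => w i' * f (q i'))]
      refine Finset.sum_congr rfl fun l _ => ?_
      rw [hcol l, aux_homog, Real.sq_sqrt (hw0 _)]
  -- SP nonempty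
  have hSPne : SP.Nonempty := by
    refine ⟨Matrix.trace (((Matrix.of fun i (_ : Fin 1) => p_o i) : Matrix (Fin n) (Fin 1) ℝ)
        * ((Matrix.of fun i (_ : Fin 1) => p_o i) : Matrix (Fin n) (Fin 1) ℝ)ᵀ * Vbar),
      _, ⟨1, Matrix.of fun i _ => p_o i, fun i _ => (hpos i).le, rfl⟩, ?_, rfl⟩
    funext i
    rw [aux_rowsum]
    simp [hsum]
  -- SD nonempty
  have hSDne : SD.Nonempty := by
    set r : ℝ := -(∑ i, ∑ j, |Vbar i j|) with hrdef
    refine ⟨p_o ⬝ᵥ (fun _ => r), (fun _ => r), ?_, rfl⟩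
    intro b hb
    simp only [dotProduct, mulVec, Matrix.sub_apply, Matrix.smul_apply, Matrix.add_apply,
      Matrix.vecMulVec_apply, smul_eq_mul]
    refine Finset.sum_nonneg fun i _ => mul_nonneg (hb i)
      (Finset.sum_nonneg fun j _ => mul_nonneg ?_ (hb j))
    have h1 : |Vbar i j| ≤ ∑ i', ∑ j', |Vbar i' j'| := by
      calc |Vbar i j| ≤ ∑ j', |Vbar i j'| :=
            Finset.single_le_sum (f := fun j' => |Vbar i j'|)
              (fun j' _ => abs_nonneg _) (Finset.mem_univ j)
        _ ≤ ∑ i', ∑ j', |Vbar i' j'| :=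
            Finset.single_le_sum (f := fun i' => ∑ j', |Vbar i' j'|)
              (fun i' _ => Finset.sum_nonneg fun j' _ => abs_nonneg _) (Finset.mem_univ i)
    have h2 := neg_abs_le (Vbar i j)
    simp only [hrdef]
    linarith
  -- weak duality
  have weak : ∀ d ∈ SD, ∀ c ∈ SP, d ≤ c := by
    rintro d ⟨y, hy, rfl⟩ c ⟨Ξ, ⟨k, B, hB, rfl⟩, hrow, rfl⟩
    have key : ∀ l : Fin k, 0 ≤ (fun i => B i l) ⬝ᵥ Vbar.mulVec (fun i => B i l)
        - (∑ i, B i l) * (y ⬝ᵥ (fun i => B i l)) := by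
      intro l
      rw [← aux_quad]
      exact hy _ (fun i => hB i l)
    have hpy : p_o ⬝ᵥ y = ∑ l, (∑ i, B i l) * (y ⬝ᵥ (fun i => B i l)) := by
      rw [← hrow]
      simp only [dotProduct]
      calc ∑ i, ((B * Bᵀ).mulVec (fun _ => (1:ℝ))) i * y i
          = ∑ i, (∑ l, B i l * (∑ j, B j l)) * y i := by
            exact Finset.sum_congr rfl fun i _ => by rw [aux_rowsum]
        _ = ∑ i, ∑ l, B i l * (∑ j, B j l) * y i := by
            exact Finset.sum_congr rfl fun i _ => by rw [Finset.sum_mul]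
        _ = ∑ l, ∑ i, B i l * (∑ j, B j l) * y i := Finset.sum_comm
        _ = ∑ l, (∑ i, B i l) * (∑ i, y i * B i l) := by
            refine Finset.sum_congr rfl fun l _ => ?_
            conv_rhs => rw [Finset.mul_sum]
            exact Finset.sum_congr rfl fun i _ => by ring
    have hsn := Finset.sum_nonneg fun l (_ : l ∈ Finset.univ) => key l
    rw [Finset.sum_sub_distrib] at hsn
    rw [hpy, aux_trace Vbar hV B]
    simp only [dotProduct] at hsn ⊢
    linarith
  obtain ⟨d₀, hd₀⟩ := hSDne
  obtain ⟨c₀, hc₀⟩ := hSPne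
  have hbddB : BddBelow SP := ⟨d₀, fun c hc => weak d₀ hd₀ c hc⟩
  have hbddA : BddAbove SD := ⟨c₀, fun d hd => weak d hd c₀ hc₀⟩
  have hSPclosed : IsClosed SP := by
    have : SP = (fun t : ℝ => ((p_o, t) : (Fin n → ℝ) × ℝ)) ⁻¹' K := by
      ext t; exact ⟨fun h => claimA t h, fun h => claimB t h⟩
    rw [this]
    exact hKcomp.isClosed.preimage (continuous_const.prodMk continuous_id)
  have hμ : sInf SP ∈ SP := hSPclosed.csInf_mem ⟨c₀, hc₀⟩ hbddB
  refine le_antisymm ?_ (csSup_le ⟨d₀, hd₀⟩ fun d hd => le_csInf ⟨c₀, hc₀⟩ fun c hc => weak d hd c hc)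
  -- hard direction
  refine le_of_forall_pos_le_add fun ε hε => ?_
  have hz : ((p_o, sInf SP - ε) : (Fin n → ℝ) × ℝ) ∉ K := by
    intro h
    have h2 := csInf_le hbddB (claimB _ h)
    linarith
  obtain ⟨φ, u, hu1, hu2⟩ :=
    geometric_hahn_banach_point_closed (convex_convexHull ℝ G) hKcomp.isClosed hz
  set s := φ ((0 : Fin n → ℝ), (1 : ℝ)) with hsdef
  have hsplit : ∀ (v : Fin n → ℝ) (t : ℝ), φ (v, t) = φ (v, 0) + t * s := by
    intro v t
    have : ((v, t) : (Fin n → ℝ) × ℝ) = (v, (0:ℝ)) + t • ((0 : Fin n → ℝ), (1:ℝ)) := by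
      ext <;> simp
    rw [this, map_add, _root_.map_smul, smul_eq_mul]
  have hs : 0 < s := by
    have h1 := hu2 _ (claimA _ hμ)
    rw [hsplit] at h1 hu1
    nlinarith
  set y : Fin n → ℝ := fun j => (u - φ (Pi.single j 1, 0)) / s with hydef
  have hlin : ∀ q : Fin n → ℝ, φ (q, 0) = ∑ j, q j * φ (Pi.single j 1, 0) := by
    intro q
    have hq : ((q, (0:ℝ)) : (Fin n → ℝ) × ℝ)
        = ∑ j, q j • (((Pi.single j 1 : Fin n → ℝ), (0:ℝ)) : (Fin n → ℝ) × ℝ) := by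
      have h1 : ∑ j, q j • (Pi.single j (1:ℝ) : Fin n → ℝ) = q := by
        funext i
        rw [Finset.sum_apply]
        simp [Pi.single_apply]
      ext i
      · rw [Prod.fst_sum]
        simp only [Prod.smul_fst]
        rw [h1]
      · simp [Prod.snd_sum]
    rw [hq, map_sum]
    exact Finset.sum_congr rfl fun j _ => by rw [_root_.map_smul, smul_eq_mul]
  have hyq : ∀ q : Fin n → ℝ, (∑ j, q j) = 1 → y ⬝ᵥ q = (u - φ (q, 0)) / s := by
    intro q hq1
    rw [hlin q]
    simp only [hydef, dotProduct]
    rw [show (∑ x, (u - φ ((Pi.single x 1 : Fin n → ℝ), (0:ℝ))) / s * q x)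
        = (∑ x, (u * q x - q x * φ ((Pi.single x 1 : Fin n → ℝ), (0:ℝ)))) / s from by
      rw [Finset.sum_div]; exact Finset.sum_congr rfl fun x _ => by ring]
    rw [Finset.sum_sub_distrib, ← Finset.mul_sum, hq1, mul_one, sub_div]
  -- the dual feasible point
  have hfq : ∀ q ∈ stdSimplex ℝ (Fin n), y ⬝ᵥ q < f q := by
    intro q hq
    have hmem : ((q, f q) : (Fin n → ℝ) × ℝ) ∈ K := subset_convexHull ℝ G ⟨q, hq, rfl⟩
    have := hu2 _ hmem
    rw [hsplit] at this
    rw [hyq q hq.2]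
    rw [div_lt_iff₀ hs]
    linarith
  have hyfeas : IsCopositive (Vbar - (1/2 : ℝ) •
      (Matrix.vecMulVec (fun _ => (1 : ℝ)) y + Matrix.vecMulVec y (fun _ => (1 : ℝ)))) := by
    intro b hb
    rw [aux_quad]
    rcases eq_or_lt_of_le (Finset.sum_nonneg fun i _ => hb i) with hT | hT
    · have hb0 : b = 0 := funext fun i =>
        (Finset.sum_eq_zero_iff_of_nonneg fun i _ => hb i).1 hT.symm i (Finset.mem_univ i)
      simp [hb0]
    · set T := ∑ i, b i with hTdef
      set q : Fin n → ℝ := T⁻¹ • b with hqdef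
      have hqΔ : q ∈ stdSimplex ℝ (Fin n) := by
        constructor
        · intro i
          exact mul_nonneg (inv_nonneg.2 hT.le) (hb i)
        · simp only [hqdef, Pi.smul_apply, smul_eq_mul, ← Finset.mul_sum]
          exact inv_mul_cancel₀ hT.ne'
      have hbq : b = T • q := by
        rw [hqdef, smul_smul, mul_inv_cancel₀ hT.ne', one_smul]
      have h1 := hfq q hqΔ
      have h2 : b ⬝ᵥ Vbar.mulVec b = T^2 * f q := by
        conv_lhs => rw [hbq]
        exact aux_homog Vbar T q
      have h3 : y ⬝ᵥ b = T * (y ⬝ᵥ q) := by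
        conv_lhs => rw [hbq]
        simp [dotProduct_smul]
      rw [h2, h3]
      nlinarith [mul_pos hT hT, sq_nonneg T]
  have hval : p_o ⬝ᵥ y ∈ SD := ⟨y, hyfeas, rfl⟩
  have : sInf SP - ε < p_o ⬝ᵥ y := by
    rw [hsplit] at hu1
    have := hyq p_o hsum
    rw [dotProduct_comm]
    rw [this, lt_div_iff₀ hs]
    linarith
  have := le_csSup hbddA hval
  linarith
end

section
/- For every λ ∈ (0,1), the matrix Ξ_λ := (1−λ) p_o p_oᵀ + λ diag(p_o) satisfies Ξ_λ 𝟙 = p_o and lies in the interior of the set of completely positive n×n matrices, where the interior is taken in the topological subspace of symmetric n×n real matrices. -/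
open Matrix BigOperators

/-- The mixture of null signaling and full disclosure:
`Ξ_λ = (1 − λ) p_o p_oᵀ + λ diag(p_o)`. -/
noncomputable def XiLam {n : ℕ} (p_o : Fin n → ℝ) (lam : ℝ) : Matrix (Fin n) (Fin n) ℝ :=
  (1 - lam) • Matrix.vecMulVec p_o p_o + lam • Matrix.diagonal p_o

lemma XiLam_apply {n : ℕ} (p : Fin n → ℝ) (lam : ℝ) (i j : Fin n) :
    XiLam p lam i j = (1 - lam) * (p i * p j) + lam * (if i = j then p i else 0) := by
  simp [XiLam, Matrix.vecMulVec_apply, Matrix.diagonal_apply, Matrix.add_apply,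
    Matrix.smul_apply, smul_eq_mul]

lemma cp_zero {n : ℕ} : IsCompletelyPositive (0 : Matrix (Fin n) (Fin n) ℝ) := by
  refine ⟨0, 0, fun i j => le_refl 0, ?_⟩
  ext i j; simp [Matrix.mul_apply]

lemma cp_add {n : ℕ} {A B : Matrix (Fin n) (Fin n) ℝ} (hA : IsCompletelyPositive A)
    (hB : IsCompletelyPositive B) : IsCompletelyPositive (A + B) := by
  obtain ⟨k1, B1, h1, e1⟩ := hA
  obtain ⟨k2, B2, h2, e2⟩ := hB
  refine ⟨k1 + k2, Matrix.of (fun i => Fin.append (B1 i) (B2 i)), ?_, ?_⟩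
  · intro i j
    refine Fin.addCases (fun j => ?_) (fun j => ?_) j
    · simpa using h1 i j
    · simpa using h2 i j
  · ext i j
    simp only [Matrix.add_apply, e1, e2, Matrix.mul_apply, Matrix.transpose_apply,
      Matrix.of_apply]
    rw [Fin.sum_univ_add]
    simp

lemma cp_smul_vmv {n : ℕ} (t : ℝ) (x : Fin n → ℝ) (ht : 0 ≤ t) (hx : ∀ i, 0 ≤ x i) :
    IsCompletelyPositive (t • Matrix.vecMulVec x x) := by
  refine ⟨1, Matrix.of (fun i _ => Real.sqrt t * x i),
    fun i j => mul_nonneg (Real.sqrt_nonneg t) (hx i), ?_⟩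
  ext i j
  rw [Matrix.smul_apply, Matrix.vecMulVec_apply, smul_eq_mul, Matrix.mul_apply,
    Fin.sum_univ_one]
  simp only [Matrix.transpose_apply, Matrix.of_apply]
  rw [show Real.sqrt t * x i * (Real.sqrt t * x j)
      = (Real.sqrt t * Real.sqrt t) * (x i * x j) by ring, Real.mul_self_sqrt ht]

lemma cp_sum {n : ℕ} {ι : Type} (s : Finset ι) (f : ι → Matrix (Fin n) (Fin n) ℝ)
    (h : ∀ i ∈ s, IsCompletelyPositive (f i)) : IsCompletelyPositive (∑ i ∈ s, f i) :=
  Finset.sum_induction f _ (fun _ _ ha hb => cp_add ha hb) cp_zero h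

lemma sum_pair_eval {n : ℕ} (w : Fin n → Fin n → ℝ) (i j : Fin n) :
    ∑ k : Fin n, ∑ l : Fin n,
      w k l * (((if i = k then (1:ℝ) else 0) + (if i = l then 1 else 0)) *
               ((if j = k then (1:ℝ) else 0) + (if j = l then 1 else 0)))
    = (if i = j then (∑ l, w i l) + (∑ k, w k i) + 2 * w i i
       else w i j + w j i) := by
  have expand : ∀ k l : Fin n,
      w k l * (((if i = k then (1:ℝ) else 0) + (if i = l then 1 else 0)) *
               ((if j = k then (1:ℝ) else 0) + (if j = l then 1 else 0)))
      = (if i = k then if j = k then w k l else 0 else 0)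
        + (if i = k then if j = l then w k l else 0 else 0)
        + (if i = l then if j = k then w k l else 0 else 0)
        + (if i = l then if j = l then w k l else 0 else 0) := by
    intro k l; split_ifs <;> ring
  simp only [expand, Finset.sum_add_distrib, Finset.sum_ite_irrel,
    Finset.sum_ite_eq, Finset.sum_const_zero, Finset.mem_univ, if_true]
  by_cases hij : i = j
  · subst hij; simp; ring
  · simp [hij, Ne.symm hij]

/-- A symmetric entrywise-nonnegative diagonally dominant matrix plus a
nonnegative rank-one matrix is completely positive. -/
lemma cp_of_dd {n : ℕ} (A : Matrix (Fin n) (Fin n) ℝ) (c : Fin n → ℝ)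
    (G : Matrix (Fin n) (Fin n) ℝ)
    (hc : ∀ i, 0 ≤ c i)
    (hGs : ∀ i j, G i j = G j i)
    (hGnn : ∀ i j, 0 ≤ G i j)
    (hdd : ∀ i, ∑ j ∈ Finset.univ.erase i, G i j ≤ G i i)
    (hA : ∀ i j, A i j = c i * c j + G i j) :
    IsCompletelyPositive A := by
  set w : Fin n → Fin n → ℝ := fun k l =>
    if k = l then (G k k - ∑ j ∈ Finset.univ.erase k, G k j) / 4 else G k l / 2 with hw
  set v : Fin n → Fin n → Fin n → ℝ := fun k l i =>
    (if i = k then (1:ℝ) else 0) + (if i = l then 1 else 0) with hv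
  have hwnn : ∀ k l, 0 ≤ w k l := by
    intro k l
    by_cases h : k = l
    · simp only [hw, h, if_true]
      have := hdd l; linarith
    · simp only [hw, h, if_false]
      have := hGnn k l; linarith
  have hwsymm : ∀ k l, w k l = w l k := by
    intro k l
    by_cases h : k = l
    · subst h; rfl
    · simp only [hw, h, Ne.symm h, if_false]; rw [hGs]
  have key : A = (1:ℝ) • Matrix.vecMulVec c c
      + ∑ k : Fin n, ∑ l : Fin n, w k l • Matrix.vecMulVec (v k l) (v k l) := by
    ext i j
    simp only [Matrix.add_apply, Matrix.smul_apply, Matrix.vecMulVec_apply, smul_eq_mul,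
      Matrix.sum_apply, one_mul, hA]
    congr 1
    have := sum_pair_eval w i j
    simp only [hv]
    rw [show (∑ k : Fin n, ∑ l : Fin n, w k l *
        (((if i = k then (1:ℝ) else 0) + (if i = l then 1 else 0)) *
         ((if j = k then (1:ℝ) else 0) + (if j = l then 1 else 0)))) =
        (if i = j then (∑ l, w i l) + (∑ k, w k i) + 2 * w i i else w i j + w j i)
      from this]
    by_cases hij : i = j
    · subst hij
      simp only [if_true]
      have h1 : ∑ l, w i l = (G i i - ∑ j ∈ Finset.univ.erase i, G i j) / 4
          + ∑ l ∈ Finset.univ.erase i, G i l / 2 := by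
        rw [← Finset.sum_erase_add Finset.univ _ (Finset.mem_univ i)]
        rw [add_comm]
        congr 1
        · simp [hw]
        · apply Finset.sum_congr rfl
          intro l hl
          have : i ≠ l := fun h => (Finset.mem_erase.mp hl).1 h.symm
          simp [hw, this]
      have h2 : ∑ k, w k i = ∑ l, w i l := by
        apply Finset.sum_congr rfl; intro l _; rw [hwsymm]
      have h3 : w i i = (G i i - ∑ j ∈ Finset.univ.erase i, G i j) / 4 := by simp [hw]
      rw [h1, h2, h1, h3]
      have : ∑ l ∈ Finset.univ.erase i, G i l / 2
          = (∑ l ∈ Finset.univ.erase i, G i l) / 2 := by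
        rw [Finset.sum_div]
      rw [this]
      ring
    · simp only [hij, if_false, hw, Ne.symm hij]
      rw [hGs j i]
      ring
  rw [key]
  refine cp_add (cp_smul_vmv 1 c zero_le_one hc) ?_
  refine cp_sum _ _ (fun k _ => cp_sum _ _ (fun l _ => ?_))
  exact cp_smul_vmv _ _ (hwnn k l) (fun i => by
    simp only [hv]; positivity)

/-- For every `λ ∈ (0,1)`, the matrix `Ξ_λ = (1 − λ) p_o p_oᵀ + λ diag(p_o)` satisfies
`Ξ_λ 𝟙 = p_o` and lies in the interior (in the subspace of symmetric matrices) of the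
set of completely positive matrices. -/
theorem XiLam_mem_interior_cp {n : ℕ}
    (p_o : Fin n → ℝ) (hpos : ∀ j, 0 < p_o j) (hsum : ∑ j, p_o j = 1)
    (lam : ℝ) (hlam0 : 0 < lam) (hlam1 : lam < 1) :
    (XiLam p_o lam).mulVec (fun _ => (1 : ℝ)) = p_o ∧
      ∃ hs : (XiLam p_o lam).IsSymm,
        (⟨XiLam p_o lam, hs⟩ : {A : Matrix (Fin n) (Fin n) ℝ // A.IsSymm}) ∈
          interior {A : {A : Matrix (Fin n) (Fin n) ℝ // A.IsSymm} |
            IsCompletelyPositive A.val} := by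
  haveI hne : Nonempty (Fin n) := by
    rcases Nat.eq_zero_or_pos n with h | h
    · subst h; simp at hsum
    · exact ⟨⟨0, h⟩⟩
  -- basic facts about p_o
  have hple1 : ∀ i, p_o i ≤ 1 := by
    intro i
    rw [← hsum]
    exact Finset.single_le_sum (fun j _ => (hpos j).le) (Finset.mem_univ i)
  set pm : ℝ := Finset.univ.inf' Finset.univ_nonempty p_o with hpmdef
  have hpm_le : ∀ i, pm ≤ p_o i := fun i => Finset.inf'_le _ (Finset.mem_univ i)
  have hpm0 : 0 < pm := by
    obtain ⟨i, -, hi⟩ := Finset.exists_mem_eq_inf' Finset.univ_nonempty p_o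
    rw [hpmdef, hi]; exact hpos i
  have hpm1 : pm ≤ 1 := le_trans (hpm_le (Classical.arbitrary _)) (hple1 _)
  -- the constants
  set κ : ℝ := min (lam * pm / 2) ((1 - lam) / 2) with hκdef
  have hκ0 : 0 < κ := by
    apply lt_min
    · positivity
    · linarith
  have hκ1 : κ ≤ lam * pm / 2 := min_le_left _ _
  have hκ2 : κ ≤ (1 - lam) / 2 := min_le_right _ _
  set ε : ℝ := min (κ * pm ^ 2) (lam * pm / (2 * (n + 1))) with hεdef
  have hε0 : 0 < ε := by
    apply lt_min
    · exact mul_pos hκ0 (pow_pos hpm0 2)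
    · apply div_pos (mul_pos hlam0 hpm0)
      have hn0 : (0:ℝ) ≤ (n:ℝ) := Nat.cast_nonneg n
      linarith
  have hε1 : ε ≤ κ * pm ^ 2 := min_le_left _ _
  have hε2 : ε ≤ lam * pm / (2 * (n + 1)) := min_le_right _ _
  have hμ : 0 ≤ 1 - lam - κ := by linarith
  -- symmetry of XiLam
  have hs : (XiLam p_o lam).IsSymm := by
    unfold Matrix.IsSymm
    ext i j
    rw [Matrix.transpose_apply, XiLam_apply, XiLam_apply]
    by_cases h : i = j
    · subst h; ring
    · simp only [h, Ne.symm h, if_false, mul_zero, add_zero]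
      ring
  -- part 1 : mulVec
  have hmul : (XiLam p_o lam).mulVec (fun _ => (1 : ℝ)) = p_o := by
    funext i
    simp only [Matrix.mulVec, dotProduct]
    have : ∀ j, XiLam p_o lam i j * 1
        = (1 - lam) * p_o i * p_o j + lam * (if i = j then p_o i else 0) := by
      intro j; rw [XiLam_apply]; ring
    rw [Finset.sum_congr rfl (fun j _ => this j)]
    rw [Finset.sum_add_distrib, ← Finset.mul_sum, ← Finset.mul_sum, hsum,
      Finset.sum_ite_eq]
    simp
    ring
  refine ⟨hmul, hs, ?_⟩
  -- the open neighbourhood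
  set U : Set {A : Matrix (Fin n) (Fin n) ℝ // A.IsSymm} :=
    {x | ∀ i j, |x.val i j - XiLam p_o lam i j| < ε} with hUdef
  have hUopen : IsOpen U := by
    have : U = ⋂ (i : Fin n), ⋂ (j : Fin n),
        {x : {A : Matrix (Fin n) (Fin n) ℝ // A.IsSymm} |
          x.val i j ∈ Metric.ball (XiLam p_o lam i j) ε} := by
      ext x
      simp [hUdef, Real.dist_eq, Set.mem_iInter]
    rw [this]
    refine isOpen_iInter_of_finite (fun i => isOpen_iInter_of_finite (fun j => ?_))
    exact (Metric.isOpen_ball).preimage (continuous_subtype_val.matrix_elem i j)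
  have hUmem : (⟨XiLam p_o lam, hs⟩ : {A : Matrix (Fin n) (Fin n) ℝ // A.IsSymm}) ∈ U := by
    intro i j; simpa using hε0
  -- U is contained in the CP set
  have hUsub : U ⊆ {A : {A : Matrix (Fin n) (Fin n) ℝ // A.IsSymm} |
      IsCompletelyPositive A.val} := by
    intro x hx
    set A : Matrix (Fin n) (Fin n) ℝ := x.val with hAdef
    have hxsymm : ∀ i j, A j i = A i j := fun i j => Matrix.IsSymm.apply x.prop i j
    have hclose : ∀ i j, |A i j - XiLam p_o lam i j| < ε := hx
    set c : Fin n → ℝ := fun i => Real.sqrt (1 - lam - κ) * p_o i with hcdef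
    set G : Matrix (Fin n) (Fin n) ℝ :=
      Matrix.of (fun i j => A i j - (1 - lam - κ) * (p_o i * p_o j)) with hGdef
    have hGform : ∀ i j, G i j = (A i j - XiLam p_o lam i j)
        + κ * (p_o i * p_o j) + lam * (if i = j then p_o i else 0) := by
      intro i j
      rw [hGdef, XiLam_apply]
      simp only [Matrix.of_apply]
      ring
    have hSl : ∀ i j, -ε < A i j - XiLam p_o lam i j :=
      fun i j => (abs_lt.mp (hclose i j)).1
    have hSu : ∀ i j, A i j - XiLam p_o lam i j < ε :=
      fun i j => (abs_lt.mp (hclose i j)).2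
    have hκpm : ∀ i j, κ * pm ^ 2 ≤ κ * (p_o i * p_o j) := by
      intro i j
      apply mul_le_mul_of_nonneg_left _ hκ0.le
      have h1 := hpm_le i; have h2 := hpm_le j
      nlinarith [hpm0]
    have hGnn : ∀ i j, 0 ≤ G i j := by
      intro i j
      rw [hGform]
      have h1 := hSl i j
      have h2 := hκpm i j
      have h3 : 0 ≤ lam * (if i = j then p_o i else 0) := by
        split_ifs with h
        · exact mul_nonneg hlam0.le (hpos i).le
        · simp
      linarith
    have hGs : ∀ i j, G i j = G j i := by
      intro i j
      rw [hGdef]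
      simp only [Matrix.of_apply]
      rw [hxsymm j i]  -- A i j = A j i? hxsymm j i : A i j = A j i
      ring
    have hdd : ∀ i, ∑ j ∈ Finset.univ.erase i, G i j ≤ G i i := by
      intro i
      have hbound : ∀ j ∈ Finset.univ.erase i, G i j ≤ ε + κ * p_o j := by
        intro j hj
        have hji : j ≠ i := (Finset.mem_erase.mp hj).1
        have hij : i ≠ j := hji.symm
        rw [hGform]
        simp only [hij, if_false]
        have h1 := hSu i j
        have h2 : κ * (p_o i * p_o j) ≤ κ * p_o j := by
          apply mul_le_mul_of_nonneg_left _ hκ0.le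
          nlinarith [hpos j, hple1 i]
        simp only [mul_zero]
        linarith
      have hsum1 : ∑ j ∈ Finset.univ.erase i, G i j
          ≤ ∑ j ∈ Finset.univ.erase i, (ε + κ * p_o j) :=
        Finset.sum_le_sum hbound
      have hsum2 : ∑ j ∈ Finset.univ.erase i, (ε + κ * p_o j)
          = (Finset.univ.erase i).card * ε + κ * ∑ j ∈ Finset.univ.erase i, p_o j := by
        rw [Finset.sum_add_distrib, Finset.sum_const, ← Finset.mul_sum, nsmul_eq_mul]
      have hcard : ((Finset.univ.erase i).card : ℝ) ≤ n := by
        have h0 := Finset.card_erase_le (s := (Finset.univ : Finset (Fin n))) (a := i)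
        have hn : (Finset.univ : Finset (Fin n)).card = n :=
          Finset.card_univ.trans (Fintype.card_fin n)
        have : (Finset.univ.erase i).card ≤ n := le_trans h0 (le_of_eq hn)
        exact_mod_cast this
      have hsump : ∑ j ∈ Finset.univ.erase i, p_o j ≤ 1 := by
        have := Finset.sum_erase_add Finset.univ p_o (Finset.mem_univ i)
        have h2 := hpos i
        rw [hsum] at this
        linarith
      have hGii : -ε + lam * pm ≤ G i i := by
        rw [hGform]
        simp only [if_true]
        have h1 := hSl i i
        have h2 : lam * pm ≤ lam * p_o i := by
          apply mul_le_mul_of_nonneg_left (hpm_le i) hlam0.le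
        nlinarith [hκ0, hpos i]
      have hmain : (n : ℝ) * ε + κ ≤ -ε + lam * pm := by
        have hpos' : (0:ℝ) < (n:ℝ) + 1 := by positivity
        have h1 : ((n : ℝ) + 1) * ε ≤ lam * pm / 2 := by
          calc ((n:ℝ)+1) * ε ≤ ((n:ℝ)+1) * (lam * pm / (2 * ((n:ℝ)+1))) :=
              mul_le_mul_of_nonneg_left hε2 hpos'.le
            _ = lam * pm / 2 := by field_simp
        linarith
      calc ∑ j ∈ Finset.univ.erase i, G i j
          ≤ (Finset.univ.erase i).card * ε + κ * ∑ j ∈ Finset.univ.erase i, p_o j := by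
            rw [← hsum2]; exact hsum1
        _ ≤ (n : ℝ) * ε + κ * 1 := by
            have := mul_le_mul_of_nonneg_right hcard hε0.le
            have h2 := mul_le_mul_of_nonneg_left hsump hκ0.le
            linarith
        _ ≤ -ε + lam * pm := by rw [mul_one]; exact hmain
        _ ≤ G i i := hGii
    have hAform : ∀ i j, A i j = c i * c j + G i j := by
      intro i j
      rw [hGdef, hcdef]
      simp only [Matrix.of_apply]
      rw [show Real.sqrt (1 - lam - κ) * p_o i * (Real.sqrt (1 - lam - κ) * p_o j)
          = (Real.sqrt (1 - lam - κ) * Real.sqrt (1 - lam - κ)) * (p_o i * p_o j) by ring,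
        Real.mul_self_sqrt hμ]
      ring
    exact cp_of_dd A c G
      (fun i => mul_nonneg (Real.sqrt_nonneg _) (hpos i).le) hGs hGnn hdd hAform
  rw [mem_interior_iff_mem_nhds]
  exact Filter.mem_of_superset (hUopen.mem_nhds hUmem) hUsub
end

section
/- If Ξ ∈ ℝ^{n×n} is completely positive and Ξ 𝟙 = p_o, then diag(p_o) − Ξ and Ξ − p_o p_oᵀ are both positive semidefinite; that is, p_o p_oᵀ ⪯ Ξ ⪯ diag(p_o) in the semidefinite (Loewner) order. -/
open Matrix BigOperators

/-- If `Ξ` is completely positive with `Ξ 𝟙 = p_o`, then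
`p_o p_oᵀ ⪯ Ξ ⪯ diag(p_o)` in the Loewner order. -/
theorem cp_loewner_bounds {n : ℕ}
    (p_o : Fin n → ℝ) (hpos : ∀ j, 0 < p_o j) (hsum : ∑ j, p_o j = 1)
    (Ξ : Matrix (Fin n) (Fin n) ℝ)
    (hCP : IsCompletelyPositive Ξ) (hrow : Ξ.mulVec (fun _ => (1 : ℝ)) = p_o) :
    (Matrix.diagonal p_o - Ξ).PosSemidef ∧
      (Ξ - Matrix.vecMulVec p_o p_o).PosSemidef := by
  obtain ⟨k, B, hB, hΞ⟩ := hCP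
  -- column sums of Bᵀ
  set s : Fin k → ℝ := fun c => ∑ i, B i c with hs
  have hrow' : ∀ i, ∑ c, B i c * s c = p_o i := by
    intro i
    have h := congrFun hrow i
    simp only [hΞ, Matrix.mulVec, dotProduct, Matrix.mul_apply,
      Matrix.transpose_apply, mul_one] at h
    rw [← h, Finset.sum_comm]
    simp [hs, Finset.mul_sum]
  have hssq : ∑ c, s c * s c = 1 := by
    rw [← hsum]
    have : ∀ i, p_o i = ∑ c, B i c * s c := fun i => (hrow' i).symm
    simp_rw [this]
    rw [Finset.sum_comm]
    congr 1
    ext c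
    rw [← Finset.sum_mul]
  -- quadratic form of Ξ
  have hquad : ∀ x : Fin n → ℝ,
      x ⬝ᵥ Ξ.mulVec x = ∑ c, (∑ i, B i c * x i) ^ 2 := by
    intro x
    simp only [hΞ, Matrix.mulVec, dotProduct, Matrix.mul_apply,
      Matrix.transpose_apply]
    have h1 : ∀ c : Fin k, (∑ i, B i c * x i) ^ 2
        = ∑ i, ∑ j, x i * (B i c * B j c * x j) := by
      intro c
      rw [sq, Finset.sum_mul]
      refine Finset.sum_congr rfl fun i _ => ?_
      rw [Finset.mul_sum]
      exact Finset.sum_congr rfl fun j _ => by ring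
    simp_rw [h1]
    conv_rhs => rw [Finset.sum_comm]
    refine Finset.sum_congr rfl fun i _ => ?_
    conv_rhs => rw [Finset.sum_comm]
    rw [Finset.mul_sum]
    refine Finset.sum_congr rfl fun j _ => ?_
    rw [Finset.sum_mul, Finset.mul_sum]
  have hermΞ : Ξ.IsHermitian := by
    rw [hΞ]
    ext i j
    simp [Matrix.mul_apply, mul_comm]
  constructor
  · refine Matrix.PosSemidef.of_dotProduct_mulVec_nonneg ((Matrix.isHermitian_diagonal p_o).sub hermΞ) fun x => ?_
    rw [star_trivial, Matrix.sub_mulVec, dotProduct_sub, hquad, sub_nonneg]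
    have hdiag : x ⬝ᵥ (Matrix.diagonal p_o) *ᵥ x = ∑ i, p_o i * x i ^ 2 := by
      simp [Matrix.mulVec_diagonal, dotProduct, sq]
      exact Finset.sum_congr rfl fun i _ => by ring
    rw [hdiag]
    calc ∑ c, (∑ i, B i c * x i) ^ 2
        ≤ ∑ c, s c * ∑ i, B i c * x i ^ 2 := by
          refine Finset.sum_le_sum fun c _ => ?_
          exact Finset.sum_sq_le_sum_mul_sum_of_sq_eq_mul _
            (fun i _ => hB i c) (fun i _ => mul_nonneg (hB i c) (sq_nonneg _))
            (fun i _ => by ring)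
      _ = ∑ i, p_o i * x i ^ 2 := by
          simp_rw [Finset.mul_sum]
          rw [Finset.sum_comm]
          refine Finset.sum_congr rfl fun i _ => ?_
          rw [← hrow' i, Finset.sum_mul]
          exact Finset.sum_congr rfl fun c _ => by ring
  · have hermV : (Matrix.vecMulVec p_o p_o).IsHermitian := by
      ext i j
      simp [Matrix.vecMulVec_apply, mul_comm]
    refine Matrix.PosSemidef.of_dotProduct_mulVec_nonneg (hermΞ.sub hermV) fun x => ?_
    rw [star_trivial, Matrix.sub_mulVec, dotProduct_sub, hquad, sub_nonneg]
    have hv : x ⬝ᵥ (Matrix.vecMulVec p_o p_o) *ᵥ x = (∑ i, p_o i * x i) ^ 2 := by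
      simp only [Matrix.mulVec, dotProduct, Matrix.vecMulVec_apply, sq]
      rw [Finset.sum_mul]
      refine Finset.sum_congr rfl fun i _ => ?_
      rw [Finset.mul_sum, Finset.mul_sum]
      exact Finset.sum_congr rfl fun j _ => by ring
    rw [hv]
    have hpx : ∑ i, p_o i * x i = ∑ c, s c * ∑ i, B i c * x i := by
      simp_rw [Finset.mul_sum]
      rw [Finset.sum_comm]
      refine Finset.sum_congr rfl fun i _ => ?_
      rw [← hrow' i, Finset.sum_mul]
      exact Finset.sum_congr rfl fun c _ => by ring
    rw [hpx]
    calc (∑ c, s c * ∑ i, B i c * x i) ^ 2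
        ≤ (∑ c, s c ^ 2) * ∑ c, (∑ i, B i c * x i) ^ 2 :=
          Finset.sum_mul_sq_le_sq_mul_sq _ _ _
      _ = ∑ c, (∑ i, B i c * x i) ^ 2 := by
          simp_rw [sq] at hssq ⊢
          rw [hssq, one_mul]
end

section
/- For every symmetric V̄ ∈ ℝ^{n×n}, the primal completely positive program admits an optimal solution of CP-rank at most n: there exist a completely positive Ξ* with Ξ* 𝟙 = p_o minimizing tr(Ξ V̄) over the feasible set, and an entrywise-nonnegative matrix B ∈ ℝ^{n×n} such that Ξ* = B Bᵀ. -/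
open Matrix BigOperators

namespace CPaux

variable {n : ℕ}

/-- Quadratic form of `V` (in trace convention). -/
def qf (V : Matrix (Fin n) (Fin n) ℝ) (x : Fin n → ℝ) : ℝ :=
  ∑ i, ∑ j, x i * x j * V j i

/-- Row-sum of a vector. -/
def sv (x : Fin n → ℝ) : ℝ := ∑ j, x j

lemma qf_smul (V : Matrix (Fin n) (Fin n) ℝ) (t : ℝ) (x : Fin n → ℝ) :
    qf V (t • x) = t ^ 2 * qf V x := by
  simp only [qf, Pi.smul_apply, smul_eq_mul, Finset.mul_sum]
  exact Finset.sum_congr rfl fun i _ => Finset.sum_congr rfl fun j _ => by ring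

lemma qf_zero (V : Matrix (Fin n) (Fin n) ℝ) : qf V (0 : Fin n → ℝ) = 0 := by
  simp [qf]

lemma sv_smul (t : ℝ) (x : Fin n → ℝ) : sv (t • x) = t * sv x := by
  simp [sv, Finset.mul_sum]

/-- Sum over `Fin n` of a padded family equals the sum over `Fin K`, when `K ≤ n`. -/
lemma sum_pad {K : ℕ} (hK : K ≤ n) (f : Fin K → ℝ) :
    (∑ k : Fin n, if h : (k : ℕ) < K then f ⟨k, h⟩ else 0) = ∑ k : Fin K, f k := by
  set F : ℕ → ℝ := fun m => if h : m < K then f ⟨m, h⟩ else 0 with hF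
  have h1 : (∑ k : Fin n, if h : (k : ℕ) < K then f ⟨k, h⟩ else 0) = ∑ m ∈ Finset.range n, F m :=
    Fin.sum_univ_eq_sum_range F n
  have h2 : ∑ k : Fin K, f k = ∑ m ∈ Finset.range K, F m := by
    rw [← Fin.sum_univ_eq_sum_range F K]
    refine Finset.sum_congr rfl fun k _ => ?_
    simp [hF, k.isLt]
  rw [h1, h2, Finset.range_eq_Ico,
    ← Finset.sum_Ico_consecutive _ (Nat.zero_le K) hK]
  have h3 : (∑ m ∈ Finset.Ico K n, F m) = 0 := by
    refine Finset.sum_eq_zero fun m hm => ?_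
    rw [Finset.mem_Ico] at hm
    simp [hF, dif_neg (by omega : ¬ m < K)]
  rw [h3, add_zero, Finset.range_eq_Ico]

/-- The key reduction: any nonnegative family of `K` vectors can be replaced by a
family of `n` vectors with the same "marginal" and no larger objective. -/
lemma reduce (V : Matrix (Fin n) (Fin n) ℝ) :
    ∀ K : ℕ, ∀ b : Fin K → Fin n → ℝ, (∀ k i, 0 ≤ b k i) →
    ∃ c : Fin n → Fin n → ℝ, (∀ k i, 0 ≤ c k i) ∧
      (∀ i, ∑ k, c k i * sv (c k) = ∑ k, b k i * sv (b k)) ∧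
      (∑ k, qf V (c k)) ≤ ∑ k, qf V (b k) := by
  intro K
  induction K using Nat.strong_induction_on with
  | _ K IH =>
  intro b hb
  by_cases hK : K ≤ n
  · -- pad with zero vectors
    refine ⟨fun k => if h : (k : ℕ) < K then b ⟨k, h⟩ else 0, ?_, ?_, ?_⟩
    · intro k i
      by_cases h : (k : ℕ) < K
      · simpa [h] using hb ⟨k, h⟩ i
      · simp [h]
    · intro i
      rw [← sum_pad hK (fun k => b k i * sv (b k))]
      refine Finset.sum_congr rfl fun k _ => ?_
      by_cases h : (k : ℕ) < K
      · simp [h]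
      · simp [h, sv]
    · rw [← sum_pad hK (fun k => qf V (b k))]
      refine le_of_eq (Finset.sum_congr rfl fun k _ => ?_)
      by_cases h : (k : ℕ) < K
      · simp [h]
      · simp [h, qf_zero]
  · -- K > n
    push_neg at hK
    by_cases hzero : ∃ k₀, b k₀ = 0
    · -- delete a zero vector and recurse
      obtain ⟨k₀, hk₀⟩ := hzero
      obtain ⟨m, rfl⟩ : ∃ m, K = m + 1 := ⟨K - 1, by omega⟩
      obtain ⟨c, hc0, hcmar, hcobj⟩ :=
        IH m (by omega) (fun k => b (k₀.succAbove k)) (fun k i => hb _ i)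
      refine ⟨c, hc0, ?_, ?_⟩
      · intro i
        rw [hcmar i, Fin.sum_univ_succAbove (fun k => b k i * sv (b k)) k₀, hk₀]
        simp
      · refine hcobj.trans (le_of_eq ?_)
        rw [Fin.sum_univ_succAbove (fun k => qf V (b k)) k₀, hk₀, qf_zero, zero_add]
    · -- no zero vector: find a dependence and kill one coefficient
      push_neg at hzero
      have hslt : ∀ k, 0 < sv (b k) := by
        intro k
        obtain ⟨i, hi⟩ := Function.ne_iff.mp (hzero k)
        have hbi : 0 < b k i := lt_of_le_of_ne (hb k i) (Ne.symm hi)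
        exact lt_of_lt_of_le hbi
          (Finset.single_le_sum (fun j _ => hb k j) (Finset.mem_univ i))
      have hdep : ¬ LinearIndependent ℝ (fun k : Fin K => sv (b k) • b k) := by
        intro h
        have h2 := h.fintype_card_le_finrank
        rw [Module.finrank_fin_fun, Fintype.card_fin] at h2
        omega
      obtain ⟨μ, hμsum, kstar, hμk⟩ := Fintype.not_linearIndependent_iff.mp hdep
      have hcomp : ∀ ι : Fin n, ∑ k, μ k * (sv (b k) * b k ι) = 0 := by
        intro ι
        have h3 := congrFun hμsum ι
        simpa [Finset.sum_apply, mul_assoc] using h3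
      have hsq : ∑ k, μ k * sv (b k) ^ 2 = 0 := by
        have h4 : ∑ ι : Fin n, ∑ k, μ k * (sv (b k) * b k ι) = 0 := by
          simp [hcomp]
        rw [Finset.sum_comm] at h4
        rw [← h4]
        refine Finset.sum_congr rfl fun k _ => ?_
        rw [← Finset.mul_sum, ← Finset.mul_sum]
        unfold sv
        ring
      obtain ⟨ν, hνcomp, hνk, hνsq, hνq⟩ :
          ∃ ν : Fin K → ℝ, (∀ ι : Fin n, ∑ k, ν k * (sv (b k) * b k ι) = 0) ∧
            ν kstar ≠ 0 ∧ (∑ k, ν k * sv (b k) ^ 2 = 0) ∧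
            (∑ k, ν k * qf V (b k)) ≤ 0 := by
        by_cases hsign : ∑ k, μ k * qf V (b k) ≤ 0
        · exact ⟨μ, hcomp, hμk, hsq, hsign⟩
        · refine ⟨-μ, fun ι => ?_, by simpa using hμk, ?_, ?_⟩
          · simp only [Pi.neg_apply, neg_mul, Finset.sum_neg_distrib, hcomp ι, neg_zero]
          · simp only [Pi.neg_apply, neg_mul, Finset.sum_neg_distrib, hsq, neg_zero]
          · simp only [Pi.neg_apply, neg_mul, Finset.sum_neg_distrib]
            linarith
      have hneg : ∃ k, ν k < 0 := by
        by_contra h5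
        push_neg at h5
        have hall := (Finset.sum_eq_zero_iff_of_nonneg
          (fun k _ => mul_nonneg (h5 k) (sq_nonneg _))).mp hνsq
        have h6 := hall kstar (Finset.mem_univ _)
        have h7 := hslt kstar
        rcases mul_eq_zero.mp h6 with h8 | h8
        · exact hνk h8
        · nlinarith
      obtain ⟨k₁, hk₁⟩ := hneg
      obtain ⟨k₀, hk₀T, hk₀max⟩ := Finset.exists_max_image
        (Finset.univ.filter fun k => ν k < 0) (fun k => -ν k)
        ⟨k₁, by simp [hk₁]⟩
      have hνk₀ : ν k₀ < 0 := (Finset.mem_filter.mp hk₀T).2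
      set t : ℝ := 1 / (-ν k₀) with htdef
      have ht : 0 < t := by
        rw [htdef]; exact one_div_pos.mpr (by linarith)
      have ht1 : t * (-ν k₀) = 1 := by
        rw [htdef]; exact one_div_mul_cancel (by linarith)
      set lam : Fin K → ℝ := fun k => 1 + t * ν k with hlamdef
      have hlam0 : ∀ k, 0 ≤ lam k := by
        intro k
        by_cases hk : ν k < 0
        · have h9 : -ν k ≤ -ν k₀ := hk₀max k (Finset.mem_filter.mpr ⟨Finset.mem_univ _, hk⟩)
          have h10 : t * (-ν k) ≤ t * (-ν k₀) := mul_le_mul_of_nonneg_left h9 ht.le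
          rw [ht1] at h10
          simp only [hlamdef]
          nlinarith
        · push_neg at hk
          have : (0:ℝ) ≤ t * ν k := mul_nonneg ht.le hk
          simp only [hlamdef]
          linarith
      have hlamk₀ : lam k₀ = 0 := by
        have : t * ν k₀ = -1 := by nlinarith
        simp only [hlamdef, this]
        ring
      set b' : Fin K → Fin n → ℝ := fun k => Real.sqrt (lam k) • b k with hb'def
      have hb'0 : ∀ k i, 0 ≤ b' k i :=
        fun k i => mul_nonneg (Real.sqrt_nonneg _) (hb k i)
      have hb'mar : ∀ k (i : Fin n), b' k i * sv (b' k) = lam k * (b k i * sv (b k)) := by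
        intro k i
        have h11 : Real.sqrt (lam k) * Real.sqrt (lam k) = lam k :=
          Real.mul_self_sqrt (hlam0 k)
        simp only [hb'def, Pi.smul_apply, smul_eq_mul, sv_smul]
        linear_combination b k i * sv (b k) * h11
      have hb'qf : ∀ k, qf V (b' k) = lam k * qf V (b k) := by
        intro k
        rw [hb'def]
        simp only
        rw [qf_smul, Real.sq_sqrt (hlam0 k)]
      have hlamsum : ∀ (x : Fin K → ℝ),
          ∑ k, lam k * x k = (∑ k, x k) + t * ∑ k, ν k * x k := by
        intro x
        rw [Finset.mul_sum, ← Finset.sum_add_distrib]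
        refine Finset.sum_congr rfl fun k _ => ?_
        simp only [hlamdef]
        ring
      have hb'marsum : ∀ i : Fin n, ∑ k, b' k i * sv (b' k) = ∑ k, b k i * sv (b k) := by
        intro i
        have h12 : ∑ k, ν k * (b k i * sv (b k)) = 0 := by
          rw [← hνcomp i]
          exact Finset.sum_congr rfl fun k _ => by ring
        calc ∑ k, b' k i * sv (b' k) = ∑ k, lam k * (b k i * sv (b k)) :=
              Finset.sum_congr rfl fun k _ => hb'mar k i
          _ = (∑ k, b k i * sv (b k)) + t * ∑ k, ν k * (b k i * sv (b k)) := hlamsum _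
          _ = ∑ k, b k i * sv (b k) := by rw [h12, mul_zero, add_zero]
      have hb'obj : ∑ k, qf V (b' k) ≤ ∑ k, qf V (b k) := by
        calc ∑ k, qf V (b' k) = ∑ k, lam k * qf V (b k) :=
              Finset.sum_congr rfl fun k _ => hb'qf k
          _ = (∑ k, qf V (b k)) + t * ∑ k, ν k * qf V (b k) := hlamsum _
          _ ≤ ∑ k, qf V (b k) := by nlinarith
      have hb'k₀ : b' k₀ = 0 := by
        rw [hb'def]
        simp [hlamk₀]
      obtain ⟨m, hm⟩ : ∃ m, K = m + 1 := ⟨K - 1, by omega⟩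
      subst hm
      obtain ⟨c, hc0, hcmar, hcobj⟩ :=
        IH m (by omega) (fun k => b' (k₀.succAbove k)) (fun k i => hb'0 _ i)
      refine ⟨c, hc0, ?_, ?_⟩
      · intro i
        rw [hcmar i, ← hb'marsum i,
          Fin.sum_univ_succAbove (fun k => b' k i * sv (b' k)) k₀, hb'k₀]
        simp
      · refine hcobj.trans (le_of_eq ?_) |>.trans hb'obj
        rw [Fin.sum_univ_succAbove (fun k => qf V (b' k)) k₀, hb'k₀, qf_zero, zero_add]

/-- Trace of a factored matrix against `V` is the sum of quadratic forms. -/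
lemma trace_eq {K : ℕ} (V : Matrix (Fin n) (Fin n) ℝ) (d : Fin K → Fin n → ℝ) :
    Matrix.trace ((Matrix.of fun i j => ∑ k, d k i * d k j) * V) = ∑ k, qf V (d k) := by
  simp only [Matrix.trace, Matrix.diag, Matrix.mul_apply, Matrix.of_apply, qf,
    Finset.sum_mul]
  conv_lhs => enter [2, i]; rw [Finset.sum_comm]
  rw [Finset.sum_comm]

/-- mulVec of a factored matrix against `1`. -/
lemma mulVec_eq {K : ℕ} (d : Fin K → Fin n → ℝ) (i : Fin n) :
    (Matrix.of fun i j => ∑ k, d k i * d k j).mulVec (fun _ => (1 : ℝ)) i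
      = ∑ k, d k i * sv (d k) := by
  simp only [Matrix.mulVec, dotProduct, Matrix.of_apply, mul_one]
  rw [Finset.sum_comm]
  exact Finset.sum_congr rfl fun k _ => by rw [← Finset.mul_sum]; rfl

end CPaux

/-- For every symmetric `V̄`, the primal completely positive program admits an optimal
solution of CP-rank at most `n`: there is a feasible minimizer `Ξ*` together with an
entrywise-nonnegative `n × n` matrix `B` such that `Ξ* = B Bᵀ`. -/
theorem cp_program_min_of_cp_rank_le {n : ℕ}
    (p_o : Fin n → ℝ) (hpos : ∀ j, 0 < p_o j) (hsum : ∑ j, p_o j = 1)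
    (Vbar : Matrix (Fin n) (Fin n) ℝ) (hV : Vbar.IsSymm) :
    ∃ (Ξstar : Matrix (Fin n) (Fin n) ℝ) (B : Matrix (Fin n) (Fin n) ℝ),
      IsCompletelyPositive Ξstar ∧ Ξstar.mulVec (fun _ => (1 : ℝ)) = p_o ∧
      (∀ Ξ : Matrix (Fin n) (Fin n) ℝ,
        IsCompletelyPositive Ξ → Ξ.mulVec (fun _ => (1 : ℝ)) = p_o →
        Matrix.trace (Ξstar * Vbar) ≤ Matrix.trace (Ξ * Vbar)) ∧
      (∀ i j, 0 ≤ B i j) ∧ Ξstar = B * Bᵀ := by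
  classical
  open CPaux in
  have hn : n ≠ 0 := by rintro rfl; simp at hsum
  have k0 : Fin n := ⟨0, Nat.pos_of_ne_zero hn⟩
  set S : Set (Fin n → Fin n → ℝ) :=
    {c | (∀ k i, 0 ≤ c k i) ∧ ∀ i, ∑ k, c k i * CPaux.sv (c k) = p_o i} with hSdef
  -- S is nonempty
  have hSne : S.Nonempty := by
    refine ⟨fun k i => if k = k0 then p_o i else 0, fun k i => ?_, fun i => ?_⟩
    · dsimp only; split
      · exact (hpos i).le
      · exact le_rfl
    · rw [Finset.sum_eq_single_of_mem k0 (Finset.mem_univ _)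
        (fun k _ hk => by simp [hk])]
      simp [CPaux.sv, hsum]
  -- S is bounded by [0,1] entrywise
  have hSsub : S ⊆ Set.univ.pi fun _ : Fin n =>
      Set.univ.pi fun _ : Fin n => Set.Icc (0:ℝ) 1 := by
    rintro c ⟨hc0, hcm⟩ k _ i _
    refine ⟨hc0 k i, ?_⟩
    have h1 : c k i * CPaux.sv (c k) ≤ p_o i := by
      rw [← hcm i]
      exact Finset.single_le_sum
        (f := fun k => c k i * CPaux.sv (c k))
        (fun l _ => mul_nonneg (hc0 l i) (Finset.sum_nonneg fun j _ => hc0 l j))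
        (Finset.mem_univ k)
    have h2 : p_o i ≤ 1 := by
      rw [← hsum]
      exact Finset.single_le_sum (fun j _ => (hpos j).le) (Finset.mem_univ i)
    have h3 : c k i ≤ CPaux.sv (c k) :=
      Finset.single_le_sum (fun j _ => hc0 k j) (Finset.mem_univ i)
    nlinarith [hc0 k i]
  -- S is closed
  have hScl : IsClosed S := by
    rw [hSdef]
    have e1 : {c : Fin n → Fin n → ℝ | (∀ k i, 0 ≤ c k i) ∧
        ∀ i, ∑ k, c k i * CPaux.sv (c k) = p_o i}
        = (⋂ k, ⋂ i, {c : Fin n → Fin n → ℝ | 0 ≤ c k i}) ∩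
          (⋂ i, {c : Fin n → Fin n → ℝ | ∑ k, c k i * CPaux.sv (c k) = p_o i}) := by
      ext c
      simp only [Set.mem_setOf_eq, Set.mem_inter_iff, Set.mem_iInter]
    rw [e1]
    refine IsClosed.inter (isClosed_iInter fun k => isClosed_iInter fun i => ?_)
      (isClosed_iInter fun i => ?_)
    · exact isClosed_le continuous_const ((continuous_apply i).comp (continuous_apply k))
    · refine isClosed_eq ?_ continuous_const
      refine continuous_finset_sum _ fun k _ => Continuous.mul
        ((continuous_apply i).comp (continuous_apply k)) ?_
      exact continuous_finset_sum _ fun j _ => (continuous_apply j).comp (continuous_apply k)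
  have hScomp : IsCompact S :=
    IsCompact.of_isClosed_subset
      (isCompact_univ_pi fun _ => isCompact_univ_pi fun _ => isCompact_Icc) hScl hSsub
  -- objective is continuous
  have hobjcont : Continuous fun c : Fin n → Fin n → ℝ => ∑ k, CPaux.qf Vbar (c k) := by
    refine continuous_finset_sum _ fun k _ => ?_
    simp only [CPaux.qf]
    refine continuous_finset_sum _ fun i _ => continuous_finset_sum _ fun j _ => ?_
    fun_prop
  obtain ⟨cstar, hcstarS, hcstarmin'⟩ :=
    hScomp.exists_isMinOn hSne hobjcont.continuousOn
  have hcstarmin : ∀ c ∈ S, (∑ k, CPaux.qf Vbar (cstar k)) ≤ ∑ k, CPaux.qf Vbar (c k) :=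
    fun c hc => hcstarmin' hc
  obtain ⟨hcstar0, hcstarm⟩ := hcstarS
  -- assemble
  set B : Matrix (Fin n) (Fin n) ℝ := Matrix.of fun i k => cstar k i with hBdef
  have hfac : B * Bᵀ = Matrix.of fun i j => ∑ k, cstar k i * cstar k j := by
    ext i j
    simp [hBdef, Matrix.mul_apply]
  refine ⟨B * Bᵀ, B, ⟨n, B, fun i k => hcstar0 k i, rfl⟩, ?_, ?_,
    fun i k => hcstar0 k i, rfl⟩
  · funext i
    rw [hfac, CPaux.mulVec_eq cstar i, hcstarm i]
  · intro Ξ hΞcp hΞfeas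
    obtain ⟨K, B', hB'0, rfl⟩ := hΞcp
    set d : Fin K → Fin n → ℝ := fun m i => B' i m with hddef
    have hfac' : B' * B'ᵀ = Matrix.of fun i j => ∑ m, d m i * d m j := by
      ext i j
      simp [hddef, Matrix.mul_apply]
    have hd0 : ∀ m i, 0 ≤ d m i := fun m i => hB'0 i m
    have hdfeas : ∀ i, ∑ m, d m i * CPaux.sv (d m) = p_o i := by
      intro i
      rw [← CPaux.mulVec_eq d i, ← hfac', hΞfeas]
    obtain ⟨c, hc0, hcmar, hcobj⟩ := CPaux.reduce Vbar K d hd0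
    have hcS : c ∈ S := ⟨hc0, fun i => by rw [hcmar i, hdfeas i]⟩
    calc Matrix.trace (B * Bᵀ * Vbar) = ∑ k, CPaux.qf Vbar (cstar k) := by
          rw [hfac, CPaux.trace_eq]
      _ ≤ ∑ k, CPaux.qf Vbar (c k) := hcstarmin c hcS
      _ ≤ ∑ m, CPaux.qf Vbar (d m) := hcobj
      _ = Matrix.trace (B' * B'ᵀ * Vbar) := by rw [hfac', CPaux.trace_eq]
end
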